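/- Let C_m := min_g C(g). Then log J(π) ≥ Σ_g p(g)·log C(g) + (1/C_m)·Σ_g p(g)·Σ_τ π_b(τ|g)·R(τ,g)·log π(τ|g) − Σ_g p(g)·Σ_τ (π_b(τ|g)·R(τ,g)/C(g))·log π_b(τ|g). -/

import Mathlib

open Finset

lemma jensen_log {ι : Type} [Fintype ι] (w x : ι → ℝ) (hw : ∀ i, 0 ≤ w i)
    (hw1 : ∑ i, w i = 1) (hx : ∀ i, 0 < x i) :
    ∑ i, w i * Real.log (x i) ≤ Real.log (∑ i, w i * x i) := by
  have := strictConcaveOn_log_Ioi.concaveOn.le_map_sum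
    (t := Finset.univ) (w := w) (p := x) (fun i _ => hw i) hw1
    (fun i _ => Set.mem_Ioi.2 (hx i))
  simpa [smul_eq_mul] using this

/-- with `C(g) = Σ_τ π_b(τ|g)·R(τ,g) > 0`, `C_m = min_g C(g)` and
`J(π) = Σ_g p(g)·Σ_τ π(τ|g)·R(τ,g)`, it holds that
`log J(π) ≥ Σ_g p(g)·log C(g) + (1/C_m)·Σ_g p(g)·Σ_τ π_b(τ|g)·R(τ,g)·log π(τ|g)
  − Σ_g p(g)·Σ_τ (π_b(τ|g)·R(τ,g)/C(g))·log π_b(τ|g)`. -/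
theorem stmt10 {G Ω : Type} [Fintype G] [Nonempty G] [Fintype Ω]
    (p : G → ℝ) (hp0 : ∀ g, 0 < p g) (hp1 : ∑ g, p g = 1)
    (πb π : G → Ω → ℝ)
    (hπb0 : ∀ g τ, 0 < πb g τ) (hπb1 : ∀ g, ∑ τ, πb g τ = 1)
    (hπ0 : ∀ g τ, 0 < π g τ) (hπ1 : ∀ g, ∑ τ, π g τ = 1)
    (R : Ω → G → ℝ) (hR : ∀ τ g, 0 ≤ R τ g)
    (hC : ∀ g, 0 < ∑ τ, πb g τ * R τ g) :
    Real.log (∑ g, p g * ∑ τ, π g τ * R τ g) ≥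
      (∑ g, p g * Real.log (∑ τ, πb g τ * R τ g)) +
      (1 / Finset.univ.inf' Finset.univ_nonempty (fun g => ∑ τ, πb g τ * R τ g)) *
        (∑ g, p g * ∑ τ, πb g τ * R τ g * Real.log (π g τ)) -
      ∑ g, p g * ∑ τ, (πb g τ * R τ g / (∑ τ', πb g τ' * R τ' g)) *
        Real.log (πb g τ) := by
  set C : G → ℝ := fun g => ∑ τ, πb g τ * R τ g with hCdef
  set Cm : ℝ := Finset.univ.inf' Finset.univ_nonempty C with hCm
  have hCmpos : 0 < Cm := by
    rw [hCm, Finset.lt_inf'_iff]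
    exact fun g _ => hC g
  have hCmle : ∀ g, Cm ≤ C g := fun g => Finset.inf'_le _ (mem_univ g)
  -- S g := ∑ π R > 0
  set S : G → ℝ := fun g => ∑ τ, π g τ * R τ g with hSdef
  have hS0 : ∀ g, 0 < S g := by
    intro g
    rcases lt_or_eq_of_le (Finset.sum_nonneg fun τ _ =>
      mul_nonneg (hπ0 g τ).le (hR τ g) : 0 ≤ S g) with h | h
    · exact h
    · exfalso
      have hall : ∀ τ ∈ Finset.univ, π g τ * R τ g = 0 :=
        (Finset.sum_eq_zero_iff_of_nonneg
          (fun τ _ => mul_nonneg (hπ0 g τ).le (hR τ g))).1 h.symm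
      have : C g = 0 := Finset.sum_eq_zero fun τ _ => by
        have := hall τ (mem_univ τ)
        have hRz : R τ g = 0 := by
          rcases mul_eq_zero.1 this with h' | h'
          · exact absurd h' (hπ0 g τ).ne'
          · exact h'
        simp [hRz]
      exact (hC g).ne' this
  -- inner Jensen per g
  have inner : ∀ g, Real.log (C g) + (1 / Cm) * (∑ τ, πb g τ * R τ g * Real.log (π g τ))
      - ∑ τ, (πb g τ * R τ g / C g) * Real.log (πb g τ) ≤ Real.log (S g) := by
    intro g
    have hCg := hC g
    have key := jensen_log (fun τ => πb g τ * R τ g / C g)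
      (fun τ => π g τ * C g / πb g τ)
      (fun τ => div_nonneg (mul_nonneg (hπb0 g τ).le (hR τ g)) hCg.le)
      (by rw [← Finset.sum_div]; exact div_self hCg.ne')
      (fun τ => div_pos (mul_pos (hπ0 g τ) hCg) (hπb0 g τ))
    have hsum : ∑ τ, (πb g τ * R τ g / C g) * (π g τ * C g / πb g τ) = S g := by
      apply Finset.sum_congr rfl
      intro τ _
      have h1 : πb g τ ≠ 0 := (hπb0 g τ).ne'
      have h2 : C g ≠ 0 := hCg.ne'
      field_simp
    rw [hsum] at key
    refine le_trans ?_ key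
    have expand : ∀ τ, (πb g τ * R τ g / C g) * Real.log (π g τ * C g / πb g τ)
        = (πb g τ * R τ g / C g) * Real.log (π g τ)
          + (πb g τ * R τ g / C g) * Real.log (C g)
          - (πb g τ * R τ g / C g) * Real.log (πb g τ) := by
      intro τ
      rw [Real.log_div (mul_pos (hπ0 g τ) hCg).ne' (hπb0 g τ).ne',
        Real.log_mul (hπ0 g τ).ne' hCg.ne']
      ring
    have hrw : ∑ τ, (πb g τ * R τ g / C g) * Real.log (π g τ * C g / πb g τ)
        = (1 / C g) * (∑ τ, πb g τ * R τ g * Real.log (π g τ))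
          + Real.log (C g)
          - ∑ τ, (πb g τ * R τ g / C g) * Real.log (πb g τ) := by
      simp only [expand]
      rw [Finset.sum_sub_distrib, Finset.sum_add_distrib, ← Finset.sum_mul,
        Finset.mul_sum]
      have h1 : ∑ τ, πb g τ * R τ g / C g = 1 := by
        rw [← Finset.sum_div]; exact div_self hCg.ne'
      rw [h1, one_mul]
      congr 1
      congr 1
      apply Finset.sum_congr rfl
      intro τ _
      ring
    rw [hrw]
    have hlogle : ∀ τ, πb g τ * R τ g * Real.log (π g τ) ≤ 0 := fun τ =>
      mul_nonpos_of_nonneg_of_nonpos (mul_nonneg (hπb0 g τ).le (hR τ g))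
        (Real.log_nonpos (hπ0 g τ).le
          (by
            have := Finset.single_le_sum (f := fun τ => π g τ)
              (fun τ _ => (hπ0 g τ).le) (mem_univ τ)
            rw [hπ1 g] at this; exact this))
    have hX : (∑ τ, πb g τ * R τ g * Real.log (π g τ)) ≤ 0 :=
      Finset.sum_nonpos (fun τ _ => hlogle τ)
    have : (1 / Cm) * (∑ τ, πb g τ * R τ g * Real.log (π g τ))
        ≤ (1 / C g) * (∑ τ, πb g τ * R τ g * Real.log (π g τ)) := by
      apply mul_le_mul_of_nonpos_right _ hX
      exact one_div_le_one_div_of_le hCmpos (hCmle g)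
    linarith
  -- outer Jensen
  have outer : ∑ g, p g * Real.log (S g) ≤ Real.log (∑ g, p g * S g) :=
    jensen_log p S (fun g => (hp0 g).le) hp1 hS0
  have step : ∑ g, p g * (Real.log (C g) + (1 / Cm) * (∑ τ, πb g τ * R τ g * Real.log (π g τ))
      - ∑ τ, (πb g τ * R τ g / C g) * Real.log (πb g τ)) ≤ ∑ g, p g * Real.log (S g) := by
    apply Finset.sum_le_sum
    intro g _
    exact mul_le_mul_of_nonneg_left (inner g) (hp0 g).le
  have final := le_trans step outer
  have lhs_eq : ∑ g, p g * (Real.log (C g) + (1 / Cm) * (∑ τ, πb g τ * R τ g * Real.log (π g τ))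
      - ∑ τ, (πb g τ * R τ g / C g) * Real.log (πb g τ))
      = (∑ g, p g * Real.log (C g))
        + (1 / Cm) * (∑ g, p g * ∑ τ, πb g τ * R τ g * Real.log (π g τ))
        - ∑ g, p g * ∑ τ, (πb g τ * R τ g / C g) * Real.log (πb g τ) := by
    calc ∑ g, p g * (Real.log (C g) + (1 / Cm) * (∑ τ, πb g τ * R τ g * Real.log (π g τ))
          - ∑ τ, (πb g τ * R τ g / C g) * Real.log (πb g τ))
        = ∑ g, (p g * Real.log (C g)
            + (1 / Cm) * (p g * ∑ τ, πb g τ * R τ g * Real.log (π g τ))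
            - p g * ∑ τ, (πb g τ * R τ g / C g) * Real.log (πb g τ)) :=
          Finset.sum_congr rfl (fun g _ => by ring)
      _ = _ := by
          rw [Finset.sum_sub_distrib, Finset.sum_add_distrib, ← Finset.mul_sum]
  rw [lhs_eq] at final
  exact final
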